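/- There exist three symmetric open subsets of S¹×S¹ which cover S¹×S¹ and each of which admits a symmetric motion planning rule. -/

import Mathlib

open unitInterval

/-- A subset of `S¹ × S¹` is symmetric if `(x, y) ∈ V` implies `(y, x) ∈ V`. -/
def IsSymmetricSet (V : Set (Circle × Circle)) : Prop :=
  ∀ x y : Circle, (x, y) ∈ V → (y, x) ∈ V

/-- `s` is a symmetric motion planning rule on `V ⊆ S¹ × S¹`: a continuous map from `V`
to the path space `C(I, S¹) = PS¹` (carrying the compact-open topology), sending each
`(x, y) ∈ V` to a path from `x` to `y`, such that `s (y, x)` is the time-reversal of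
`s (x, y)`. -/
def IsSymmetricMPR (V : Set (Circle × Circle)) (s : V → C(unitInterval, Circle)) : Prop :=
  Continuous s ∧
  (∀ p : V, s p 0 = p.1.1 ∧ s p 1 = p.1.2) ∧
  (∀ (x y : Circle) (hxy : (x, y) ∈ V) (hyx : (y, x) ∈ V) (t : unitInterval),
    s ⟨(y, x), hyx⟩ t = s ⟨(x, y), hxy⟩ (σ t))

section Aux

open Complex

/-- A unit complex number other than `-1` lies in the slit plane. -/
lemma unit_mem_slitPlane {w : ℂ} (hw : ‖w‖ = 1) (h : w ≠ -1) :
    w ∈ Complex.slitPlane := by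
  rw [Complex.mem_slitPlane_iff]
  by_contra h'
  push_neg at h'
  obtain ⟨h1, h2⟩ := h'
  apply h
  have hn : Complex.normSq w = 1 := by rw [← Complex.sq_norm, hw]; norm_num
  rw [Complex.normSq_apply, h2] at hn
  have : w.re = -1 := by nlinarith
  apply Complex.ext <;> simp [this, h2]

lemma unit_arg_ne_pi {w : ℂ} (hw : ‖w‖ = 1) (h : w ≠ -1) : Complex.arg w ≠ Real.pi := by
  intro hpi
  obtain ⟨h1, h2⟩ := Complex.arg_eq_pi_iff.mp hpi
  rcases Complex.mem_slitPlane_iff.mp (unit_mem_slitPlane hw h) with h' | h'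
  · linarith
  · exact h' h2

lemma unit_arg_inv {w : ℂ} (hw : ‖w‖ = 1) (h : w ≠ -1) :
    Complex.arg w⁻¹ = - Complex.arg w := by
  rw [Complex.arg_inv, if_neg (unit_arg_ne_pi hw h)]

/-- If `θ` is a continuous "angle lift" on `V` which is odd under swapping and carries
`(x, y)` to an angle from `x` to `y`, then `V` admits a symmetric motion planning rule. -/
lemma mpr_of_lift (V : Set (Circle × Circle)) (θ : V → ℝ)
    (hc : Continuous θ)
    (hend : ∀ p : V, p.1.1 * Circle.exp (θ p) = p.1.2)
    (hsym : ∀ (x y : Circle) (hxy : (x, y) ∈ V) (hyx : (y, x) ∈ V),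
      θ ⟨(y, x), hyx⟩ = - θ ⟨(x, y), hxy⟩) :
    ∃ s : V → C(unitInterval, Circle), IsSymmetricMPR V s := by
  have hF : Continuous fun q : V × unitInterval => q.1.1.1 * Circle.exp ((q.2 : ℝ) * θ q.1) := by
    apply Continuous.mul
    · exact continuous_fst.comp (continuous_subtype_val.comp continuous_fst)
    · exact Circle.exp.continuous.comp ((continuous_subtype_val.comp continuous_snd).mul
        (hc.comp continuous_fst))
  set F : C(V × unitInterval, Circle) := ⟨_, hF⟩ with hFdef
  refine ⟨fun p => F.curry p, F.curry.continuous, ?_, ?_⟩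
  · intro p
    constructor
    · show p.1.1 * Circle.exp (((0 : unitInterval) : ℝ) * θ p) = p.1.1
      simp
    · show p.1.1 * Circle.exp (((1 : unitInterval) : ℝ) * θ p) = p.1.2
      simpa using hend p
  · intro x y hxy hyx t
    show y * Circle.exp ((t : ℝ) * θ ⟨(y, x), hyx⟩)
        = x * Circle.exp (((σ t : unitInterval) : ℝ) * θ ⟨(x, y), hxy⟩)
    rw [hsym x y hxy hyx]
    have h1 : ((σ t : unitInterval) : ℝ) * θ ⟨(x, y), hxy⟩
        = θ ⟨(x, y), hxy⟩ + (t : ℝ) * (- θ ⟨(x, y), hxy⟩) := by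
      rw [unitInterval.coe_symm_eq]; ring
    rw [h1, Circle.exp_add, ← mul_assoc, hend ⟨(x, y), hxy⟩]

/-- The geodesic set: pairs which are not antipodal. -/
lemma mpr_of_not_antipodal :
    ∃ s : {p : Circle × Circle | (p.1 : ℂ) ≠ -(p.2 : ℂ)} → C(unitInterval, Circle),
      IsSymmetricMPR {p : Circle × Circle | (p.1 : ℂ) ≠ -(p.2 : ℂ)} s := by
  set V : Set (Circle × Circle) := {p | (p.1 : ℂ) ≠ -(p.2 : ℂ)} with hV
  have hz : ∀ p : V, ((p.1.2 / p.1.1 : Circle) : ℂ) ≠ -1 := by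
    rintro ⟨⟨x, y⟩, hp⟩
    simp only [Circle.coe_div]
    intro h
    apply hp
    have hx : (x : ℂ) ≠ 0 := x.coe_ne_zero
    field_simp at h
    rw [h]; ring_nf
  have hcoe : Continuous ((↑) : Circle → ℂ) := continuous_subtype_val
  have hdiv : Continuous fun p : V => (p.1.2 / p.1.1 : Circle) :=
    Continuous.div' (continuous_snd.comp continuous_subtype_val)
      (continuous_fst.comp continuous_subtype_val)
  have hg : Continuous fun p : V => ((p.1.2 / p.1.1 : Circle) : ℂ) := hcoe.comp hdiv
  apply mpr_of_lift V (fun p => Complex.arg ((p.1.2 / p.1.1 : Circle) : ℂ))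
  · rw [continuous_iff_continuousAt]
    exact fun p => ContinuousAt.comp (f := fun p : V => ((p.1.2 / p.1.1 : Circle) : ℂ))
      (Complex.continuousAt_arg (unit_mem_slitPlane (Circle.norm_coe _) (hz p)))
      hg.continuousAt
  · rintro ⟨⟨x, y⟩, hp⟩
    show x * Circle.exp (Complex.arg ((y / x : Circle) : ℂ)) = y
    rw [Circle.exp_arg]
    ext
    have hx : (x : ℂ) ≠ 0 := x.coe_ne_zero
    push_cast
    field_simp
  · intro x y hxy hyx
    show Complex.arg ((x / y : Circle) : ℂ) = - Complex.arg ((y / x : Circle) : ℂ)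
    have h1 : ((x / y : Circle) : ℂ) = (((y / x : Circle) : ℂ))⁻¹ := by
      push_cast; rw [inv_div]
    rw [h1, unit_arg_inv (Circle.norm_coe _) (hz ⟨(x, y), hxy⟩)]

/-- The generic construction for the sets `{(x, y) | f x ≠ f y}` (`f = re` or `f = im`). -/
lemma mpr_of_fun (f : ℂ → ℝ) (hf : Continuous f) :
    ∃ s : {p : Circle × Circle | f (p.1 : ℂ) ≠ f (p.2 : ℂ)} → C(unitInterval, Circle),
      IsSymmetricMPR {p : Circle × Circle | f (p.1 : ℂ) ≠ f (p.2 : ℂ)} s := by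
  set V : Set (Circle × Circle) := {p | f (p.1 : ℂ) ≠ f (p.2 : ℂ)} with hV
  have hz1 : ∀ p : V, ((p.1.2 / p.1.1 : Circle) : ℂ) ≠ 1 := by
    rintro ⟨⟨x, y⟩, hp⟩
    simp only [Circle.coe_div]
    intro h
    apply hp
    have hx : (x : ℂ) ≠ 0 := x.coe_ne_zero
    field_simp at h
    rw [h]
  have hz : ∀ p : V, (-((p.1.2 / p.1.1 : Circle) : ℂ)) ≠ -1 := by
    intro p h
    exact hz1 p (by linear_combination -h)
  have habs : ∀ p : V, ‖(-((p.1.2 / p.1.1 : Circle) : ℂ))‖ = 1 := by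
    intro p; rw [norm_neg]; exact Circle.norm_coe _
  have hcoe : Continuous ((↑) : Circle → ℂ) := continuous_subtype_val
  have hdiv : Continuous fun p : V => (p.1.2 / p.1.1 : Circle) :=
    Continuous.div' (continuous_snd.comp continuous_subtype_val)
      (continuous_fst.comp continuous_subtype_val)
  have hg : Continuous fun p : V => ((p.1.2 / p.1.1 : Circle) : ℂ) := hcoe.comp hdiv
  apply mpr_of_lift V (fun p => Complex.arg (-((p.1.2 / p.1.1 : Circle) : ℂ))
      + Real.pi * ((f (p.1.1 : ℂ) - f (p.1.2 : ℂ)) / |f (p.1.1 : ℂ) - f (p.1.2 : ℂ)|))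
  · apply Continuous.add
    · rw [continuous_iff_continuousAt]
      exact fun p => ContinuousAt.comp (f := fun p : V => -((p.1.2 / p.1.1 : Circle) : ℂ))
        (Complex.continuousAt_arg (unit_mem_slitPlane (habs p) (hz p)))
        hg.neg.continuousAt
    · have hd : Continuous fun p : V => f (p.1.1 : ℂ) - f (p.1.2 : ℂ) :=
        ((hf.comp (hcoe.comp (continuous_fst.comp (continuous_subtype_val (p := (· ∈ V)))))).sub
          (hf.comp (hcoe.comp (continuous_snd.comp (continuous_subtype_val (p := (· ∈ V)))))))
      exact continuous_const.mul (hd.div hd.abs fun p => abs_ne_zero.mpr (sub_ne_zero.mpr p.2))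
  · rintro ⟨⟨x, y⟩, hp⟩
    have hd : f (x : ℂ) - f (y : ℂ) ≠ 0 := sub_ne_zero.mpr hp
    set a : ℝ := Complex.arg (-((y / x : Circle) : ℂ)) with ha
    show x * Circle.exp (a + Real.pi * ((f (x : ℂ) - f (y : ℂ)) / |f (x : ℂ) - f (y : ℂ)|)) = y
    have key : ∀ ε : ℝ, Complex.exp ((↑Real.pi * ↑ε : ℂ) * Complex.I) = -1 →
        x * Circle.exp (a + Real.pi * ε) = y := by
      intro ε hε
      ext
      push_cast [Circle.coe_exp]
      rw [add_mul, Complex.exp_add]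
      have h1 : Complex.exp (↑a * Complex.I) = -((y / x : Circle) : ℂ) := by
        have := Complex.norm_mul_exp_arg_mul_I (-((y / x : Circle) : ℂ))
        rwa [habs ⟨(x, y), hp⟩, Complex.ofReal_one, one_mul] at this
      rw [h1, hε]
      have hx : (x : ℂ) ≠ 0 := x.coe_ne_zero
      push_cast
      field_simp
    rcases lt_or_gt_of_ne hd with h | h
    · have hs : (f (x : ℂ) - f (y : ℂ)) / |f (x : ℂ) - f (y : ℂ)| = -1 := by
        rw [abs_of_neg h, div_neg, div_self hd]
      rw [hs]
      apply key
      rw [show (↑Real.pi * ↑(-1 : ℝ) : ℂ) * Complex.I = -(↑Real.pi * Complex.I) by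
        push_cast; ring]
      rw [Complex.exp_neg, Complex.exp_pi_mul_I]
      norm_num
    · have hs : (f (x : ℂ) - f (y : ℂ)) / |f (x : ℂ) - f (y : ℂ)| = 1 := by
        rw [abs_of_pos h, div_self hd]
      rw [hs]
      apply key
      rw [show (↑Real.pi * ↑(1 : ℝ) : ℂ) * Complex.I = ↑Real.pi * Complex.I by
        push_cast; ring]
      exact Complex.exp_pi_mul_I
  · intro x y hxy hyx
    have h1 : (-((x / y : Circle) : ℂ)) = (-((y / x : Circle) : ℂ))⁻¹ := by
      push_cast
      rw [inv_neg, inv_div]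
    rw [h1]
    rw [unit_arg_inv (habs ⟨(x, y), hxy⟩) (hz ⟨(x, y), hxy⟩)]
    have : f (y : ℂ) - f (x : ℂ) = -(f (x : ℂ) - f (y : ℂ)) := by ring
    rw [this, abs_neg]
    ring

end Aux

/-- There exist three symmetric open subsets of `S¹ × S¹` which cover `S¹ × S¹` and
each of which admits a symmetric motion planning rule. -/
theorem cover_by_three_symmetric_mpr_sets :
    ∃ V₁ V₂ V₃ : Set (Circle × Circle),
      V₁ ∪ V₂ ∪ V₃ = Set.univ ∧
      (IsOpen V₁ ∧ IsSymmetricSet V₁ ∧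
        ∃ s : V₁ → C(unitInterval, Circle), IsSymmetricMPR V₁ s) ∧
      (IsOpen V₂ ∧ IsSymmetricSet V₂ ∧
        ∃ s : V₂ → C(unitInterval, Circle), IsSymmetricMPR V₂ s) ∧
      (IsOpen V₃ ∧ IsSymmetricSet V₃ ∧
        ∃ s : V₃ → C(unitInterval, Circle), IsSymmetricMPR V₃ s) := by
  refine ⟨{p | (p.1 : ℂ) ≠ -(p.2 : ℂ)},
    {p | Complex.re (p.1 : ℂ) ≠ Complex.re (p.2 : ℂ)},
    {p | Complex.im (p.1 : ℂ) ≠ Complex.im (p.2 : ℂ)}, ?_, ⟨?_, ?_, ?_⟩, ⟨?_, ?_, ?_⟩,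
    ⟨?_, ?_, ?_⟩⟩
  · ext ⟨x, y⟩
    simp only [Set.mem_union, Set.mem_setOf_eq, Set.mem_univ, iff_true]
    by_contra h
    push_neg at h
    obtain ⟨⟨h1, h2⟩, h3⟩ := h
    have hxy : (x : ℂ) = (y : ℂ) := Complex.ext h2 h3
    rw [hxy] at h1
    apply y.coe_ne_zero
    have h2 : (2 : ℂ) * (y : ℂ) = 0 := by linear_combination h1
    exact (mul_eq_zero.mp h2).resolve_left two_ne_zero
  · exact isOpen_compl_iff.mpr (isClosed_eq
      (continuous_subtype_val.comp continuous_fst)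
      ((continuous_subtype_val.comp continuous_snd).neg))
  · intro x y h k
    exact h (by rw [k, neg_neg])
  · exact mpr_of_not_antipodal
  · exact isOpen_compl_iff.mpr (isClosed_eq
      (Complex.continuous_re.comp (continuous_subtype_val.comp continuous_fst))
      (Complex.continuous_re.comp (continuous_subtype_val.comp continuous_snd)))
  · exact fun x y h => Ne.symm h
  · exact mpr_of_fun Complex.re Complex.continuous_re
  · exact isOpen_compl_iff.mpr (isClosed_eq
      (Complex.continuous_im.comp (continuous_subtype_val.comp continuous_fst))
      (Complex.continuous_im.comp (continuous_subtype_val.comp continuous_snd)))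
  · exact fun x y h => Ne.symm h
  · exact mpr_of_fun Complex.im Complex.continuous_im
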